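/- Newton's identities consequence: let A be a real symmetric n×n matrix (or a self-adjoint endomorphism of an n-dimensional real inner product space) and K > 0, N a natural number with N ≤ n. If trace(A^s) = N·K^s for every positive integer s, then the eigenvalues of A are exactly K with multiplicity N and 0 with multiplicity n - N. -/
import Mathlib


/-- Newton's identities consequence: if the `n` real eigenvalues `λᵢ` of a symmetric
endomorphism satisfy `∑ᵢ λᵢ^s = N·K^s` for all `s ≥ 1`, with `K > 0` and `N ≤ n`,
then exactly `N` of the eigenvalues equal `K` and the remaining `n - N` equal `0`. -/
theorem stmt_4 (n N : ℕ) (hN : N ≤ n) (K : ℝ) (hK : 0 < K) (l : Fin n → ℝ)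
    (h : ∀ s : ℕ, 1 ≤ s → ∑ i, l i ^ s = N * K ^ s) :
    ∃ T : Finset (Fin n), T.card = N ∧ (∀ i ∈ T, l i = K) ∧ ∀ i ∉ T, l i = 0 := by
  have h2 := h 2 (by norm_num)
  have h3 := h 3 (by norm_num)
  have h4 := h 4 (by norm_num)
  have hzero : ∑ i, (l i * (l i - K)) ^ 2 = 0 := by
    have : ∑ i, (l i * (l i - K)) ^ 2
        = (∑ i, l i ^ 4) - 2 * K * (∑ i, l i ^ 3) + K ^ 2 * (∑ i, l i ^ 2) := by
      rw [Finset.mul_sum, Finset.mul_sum, ← Finset.sum_sub_distrib, ← Finset.sum_add_distrib]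
      exact Finset.sum_congr rfl fun i _ => by ring
    rw [h2, h3, h4] at this
    rw [this]; ring
  have hdich : ∀ i, l i = 0 ∨ l i = K := by
    intro i
    have hterm : (l i * (l i - K)) ^ 2 = 0 := by
      exact (Finset.sum_eq_zero_iff_of_nonneg
        (fun j (_ : j ∈ Finset.univ) => sq_nonneg (l j * (l j - K)))).mp hzero i
        (Finset.mem_univ i)
    have := pow_eq_zero_iff (n := 2) (by norm_num) |>.mp hterm
    rcases mul_eq_zero.mp this with h' | h'
    · exact Or.inl h'
    · exact Or.inr (by linarith)
  refine ⟨Finset.univ.filter (fun i => l i = K), ?_, ?_, ?_⟩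
  · have h1 := h 1 (by norm_num)
    have hsum : ∑ i, l i = ∑ i ∈ Finset.univ.filter (fun i => l i = K), K := by
      rw [Finset.sum_filter]
      apply Finset.sum_congr rfl
      intro i _
      rcases hdich i with h' | h' <;> simp [h', hK.ne, hK.ne']
    rw [Finset.sum_const, nsmul_eq_mul] at hsum
    have : ((Finset.univ.filter (fun i => l i = K)).card : ℝ) = N := by
      simp only [pow_one] at h1
      exact mul_right_cancel₀ (ne_of_gt hK) (hsum.symm.trans h1)
    exact_mod_cast this
  · intro i hi
    exact (Finset.mem_filter.mp hi).2
  · intro i hi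
    rcases hdich i with h' | h'
    · exact h'
    · exact absurd (Finset.mem_filter.mpr ⟨Finset.mem_univ i, h'⟩) hi
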